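/- The canonical section of the length function: there is a unique set-theoretic map r : S_n → B_n such that r(s_i) = σ_i for all i and r(xy) = r(x)r(y) whenever |xy| = |x| + |y|, where |·| is the word length in S_n with respect to the transpositions s_1,...,s_{n-1}. -/

import Mathlib

def braidRels (n : ℕ) : Set (FreeGroup (Fin n)) :=
  {r | (∃ i j : Fin n, (i : ℕ) + 2 ≤ (j : ℕ) ∧
          r = .of i * .of j * (.of i)⁻¹ * (.of j)⁻¹) ∨
       (∃ i j : Fin n, (j : ℕ) = (i : ℕ) + 1 ∧
          r = .of i * .of j * .of i * (.of j * .of i * .of j)⁻¹)}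

abbrev BraidGroup (n : ℕ) : Type := PresentedGroup (braidRels n)

/-- The adjacent transposition `s_i = (i, i+1)` in `S_{n+1}`. -/
def adjTransposition (n : ℕ) (i : Fin n) : Equiv.Perm (Fin (n + 1)) :=
  Equiv.swap i.castSucc i.succ

/-- The word length of a permutation with respect to the adjacent transpositions. -/
noncomputable def wordLen (n : ℕ) (x : Equiv.Perm (Fin (n + 1))) : ℕ :=
  sInf {k | ∃ w : List (Fin n), w.length = k ∧ (w.map (adjTransposition n)).prod = x}

namespace BraidSec

open Equiv Equiv.Perm Finset

variable {n : ℕ}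

abbrev s (i : Fin n) : Equiv.Perm (Fin (n + 1)) := adjTransposition n i

lemma s_castSucc (i : Fin n) : s i i.castSucc = i.succ := Equiv.swap_apply_left _ _

lemma s_succ (i : Fin n) : s i i.succ = i.castSucc := Equiv.swap_apply_right _ _

lemma s_apply_of_ne {i : Fin n} {k : Fin (n + 1)} (h1 : k ≠ i.castSucc) (h2 : k ≠ i.succ) :
    s i k = k := Equiv.swap_apply_of_ne_of_ne h1 h2

lemma s_s (i : Fin n) (k : Fin (n + 1)) : s i (s i k) = k := Equiv.swap_apply_self _ _ _

lemma s_mul_self (i : Fin n) : s i * s i = 1 := Equiv.swap_mul_self _ _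

lemma s_ne_one (i : Fin n) : s i ≠ 1 := by
  simp [adjTransposition, Equiv.swap_eq_one_iff, Fin.ext_iff]

lemma s_lt_s {i : Fin n} {a b : Fin (n + 1)} (hab : a < b)
    (hne : ¬(a = i.castSucc ∧ b = i.succ)) : s i a < s i b := by
  have hci : (i.castSucc : ℕ) = (i : ℕ) := rfl
  have hsi : (i.succ : ℕ) = (i : ℕ) + 1 := rfl
  simp only [adjTransposition, Equiv.swap_apply_def]
  rw [Fin.lt_def] at hab ⊢
  split_ifs <;>
    simp only [Fin.lt_def, Fin.ext_iff, Fin.coe_castSucc, Fin.val_succ, not_and] at * <;> omega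

def invCount (x : Equiv.Perm (Fin (n + 1))) : ℕ :=
  ((univ : Finset (Fin (n + 1) × Fin (n + 1))).filter
    (fun p => p.1 < p.2 ∧ x p.2 < x p.1)).card

lemma invCount_mul_s_of_ascent {x : Equiv.Perm (Fin (n + 1))} {i : Fin n}
    (h : x i.castSucc < x i.succ) : invCount (x * s i) = invCount x + 1 := by
  have hfilter :
      ((univ : Finset (Fin (n + 1) × Fin (n + 1))).filter
        (fun p => p.1 < p.2 ∧ (x * s i) p.2 < (x * s i) p.1))
      = insert (i.castSucc, i.succ)
          (((univ : Finset (Fin (n + 1) × Fin (n + 1))).filter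
            (fun p => p.1 < p.2 ∧ x p.2 < x p.1)).image
            (fun p => (s i p.1, s i p.2))) := by
    ext ⟨a, b⟩
    rw [Finset.mem_filter]
    simp only [mem_filter, mem_insert, mem_image, mem_univ, true_and, Prod.mk.injEq,
      Equiv.Perm.mul_apply]
    constructor
    · rintro ⟨hab, hx⟩
      by_cases hcd : a = i.castSucc ∧ b = i.succ
      · exact Or.inl ⟨hcd.1, hcd.2⟩
      · refine Or.inr ⟨(s i a, s i b), ⟨s_lt_s hab hcd, ?_⟩, by simp [s_s], by simp [s_s]⟩
        simpa [s_s] using hx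
    · rintro (⟨ha, hb⟩ | ⟨⟨p1, p2⟩, ⟨hlt, hxp⟩, hpa, hpb⟩)
      · subst ha; subst hb
        refine ⟨Fin.castSucc_lt_succ (i := i), ?_⟩
        simpa [s_castSucc, s_succ] using h
      · subst hpa; subst hpb
        refine ⟨s_lt_s hlt ?_, by simpa [s_s] using hxp⟩
        rintro ⟨rfl, rfl⟩
        exact absurd hxp (not_lt.mpr h.le)
  have hnotmem : (i.castSucc, i.succ) ∉
      (((univ : Finset (Fin (n + 1) × Fin (n + 1))).filter
        (fun p => p.1 < p.2 ∧ x p.2 < x p.1)).image (fun p => (s i p.1, s i p.2))) := by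
    simp only [mem_image, mem_filter, mem_univ, true_and, Prod.mk.injEq, not_exists, not_and]
    rintro ⟨p1, p2⟩ ⟨hlt, -⟩ h1 h2
    have hp1 : p1 = i.succ := by rw [← s_s i p1, h1, s_castSucc]
    have hp2 : p2 = i.castSucc := by rw [← s_s i p2, h2, s_succ]
    rw [hp1, hp2] at hlt
    exact absurd hlt (not_lt.mpr (Fin.castSucc_lt_succ (i := i)).le)
  have hinj : Function.Injective (fun p : Fin (n + 1) × Fin (n + 1) => (s i p.1, s i p.2)) := by
    intro p q hpq
    simp only [Prod.mk.injEq] at hpq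
    ext
    · rw [← s_s i p.1, hpq.1, s_s]
    · rw [← s_s i p.2, hpq.2, s_s]
  rw [invCount, hfilter, card_insert_of_notMem hnotmem,
    Finset.card_image_of_injective _ hinj, invCount, add_comm]

lemma invCount_mul_s_of_descent {x : Equiv.Perm (Fin (n + 1))} {i : Fin n}
    (h : x i.succ < x i.castSucc) : invCount x = invCount (x * s i) + 1 := by
  have : (x * s i) i.castSucc < (x * s i) i.succ := by
    simpa [Equiv.Perm.mul_apply, s_castSucc, s_succ] using h
  have h2 := invCount_mul_s_of_ascent this
  rw [mul_assoc, s_mul_self, mul_one] at h2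
  exact h2

end BraidSec
namespace BraidSec
open Equiv Equiv.Perm Finset
variable {n : ℕ}

lemma exists_descent {x : Equiv.Perm (Fin (n + 1))} (hx : x ≠ 1) :
    ∃ i : Fin n, x i.succ < x i.castSucc := by
  by_contra hcon
  push_neg at hcon
  have hmono : StrictMono x := by
    rw [Fin.strictMono_iff_lt_succ]
    intro i
    exact lt_of_le_of_ne (hcon i) (x.injective.ne (Fin.castSucc_lt_succ (i := i)).ne)
  apply hx
  have hid : (x : Fin (n + 1) → Fin (n + 1)) = id := by
    apply (hmono.range_inj strictMono_id).mp
    simp [Set.range_id, x.surjective.range_eq]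
  ext k
  exact congrArg Fin.val (by simpa using congrFun hid k)

lemma invCount_one : invCount (1 : Equiv.Perm (Fin (n + 1))) = 0 := by
  simp only [invCount]
  rw [Finset.card_eq_zero, Finset.filter_eq_empty_iff]
  rintro ⟨a, b⟩ -
  simp only [Equiv.Perm.one_apply]
  rintro ⟨h1, h2⟩
  exact absurd h2 (not_lt.mpr h1.le)

lemma eq_one_of_invCount {x : Equiv.Perm (Fin (n + 1))} (h : invCount x = 0) : x = 1 := by
  by_contra hx
  obtain ⟨i, hi⟩ := exists_descent hx
  have : (i.castSucc, i.succ) ∈ ((univ : Finset (Fin (n + 1) × Fin (n + 1))).filter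
      (fun p => p.1 < p.2 ∧ x p.2 < x p.1)) := by
    simp [Fin.castSucc_lt_succ (i := i), hi]
  rw [invCount, Finset.card_eq_zero] at h
  simp [h] at this

lemma invCount_mul_s_le (x : Equiv.Perm (Fin (n + 1))) (i : Fin n) :
    invCount (x * s i) ≤ invCount x + 1 := by
  rcases lt_trichotomy (x i.castSucc) (x i.succ) with h | h | h
  · exact (invCount_mul_s_of_ascent h).le
  · exact absurd (x.injective h) (Fin.castSucc_lt_succ (i := i)).ne
  · rw [invCount_mul_s_of_descent h]; omega

lemma invCount_le_length (w : List (Fin n)) :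
    invCount (w.map (adjTransposition n)).prod ≤ w.length := by
  induction w using List.reverseRecOn with
  | nil => simp [invCount_one]
  | append_singleton w i ih =>
      rw [List.map_append, List.prod_append]
      simp only [List.map_cons, List.map_nil, List.prod_cons, List.prod_nil, mul_one,
        List.length_append, List.length_cons, List.length_nil]
      calc invCount ((w.map (adjTransposition n)).prod * s i)
          ≤ invCount (w.map (adjTransposition n)).prod + 1 := invCount_mul_s_le _ _
        _ ≤ w.length + (0 + 1) := by omega

lemma exists_word (x : Equiv.Perm (Fin (n + 1))) :
    ∃ w : List (Fin n), (w.map (adjTransposition n)).prod = x := by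
  have hx : x ∈ Submonoid.closure (Set.range fun i : Fin n => s i) := by
    rw [show (fun i : Fin n => s i) = (fun i : Fin n => Equiv.swap i.castSucc i.succ) from rfl,
      Equiv.Perm.mclosure_swap_castSucc_succ]
    trivial
  obtain ⟨l, hl, hprod⟩ := Submonoid.exists_list_of_mem_closure hx
  clear hx
  induction l generalizing x with
  | nil => exact ⟨[], by simp [← hprod]⟩
  | cons a l ih =>
      obtain ⟨i, hi⟩ := hl a (List.mem_cons_self (a := a) (l := l))
      obtain ⟨w, hw⟩ := ih (l.prod) (fun y hy => hl y (List.mem_cons_of_mem a hy)) rfl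
      exact ⟨i :: w, by simp [hw, hi, ← hprod, List.prod_cons]⟩

lemma wordLen_le {x : Equiv.Perm (Fin (n + 1))} {w : List (Fin n)}
    (h : (w.map (adjTransposition n)).prod = x) : wordLen n x ≤ w.length :=
  Nat.sInf_le ⟨w, rfl, h⟩

lemma exists_reduced_word (x : Equiv.Perm (Fin (n + 1))) :
    ∃ w : List (Fin n), w.length = wordLen n x ∧ (w.map (adjTransposition n)).prod = x := by
  have hne : {k | ∃ w : List (Fin n), w.length = k ∧ (w.map (adjTransposition n)).prod = x}.Nonempty := by
    obtain ⟨w, hw⟩ := exists_word x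
    exact ⟨w.length, w, rfl, hw⟩
  exact Nat.sInf_mem hne

lemma wordLen_eq_invCount (x : Equiv.Perm (Fin (n + 1))) : wordLen n x = invCount x := by
  apply le_antisymm
  · -- by strong induction on invCount
    suffices H : ∀ N (y : Equiv.Perm (Fin (n + 1))), invCount y ≤ N → wordLen n y ≤ invCount y by
      exact H (invCount x) x le_rfl
    intro N
    induction N with
    | zero =>
        intro y hy
        rw [eq_one_of_invCount (Nat.le_zero.mp hy)]
        have : wordLen n (1 : Equiv.Perm (Fin (n + 1))) ≤ 0 := wordLen_le (w := []) (by simp)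
        omega
    | succ N ih =>
        intro y hy
        rcases eq_or_ne y 1 with rfl | hy1
        · exact le_trans (wordLen_le (w := []) (by simp)) (Nat.zero_le _)
        · obtain ⟨i, hi⟩ := exists_descent hy1
          have hdec := invCount_mul_s_of_descent hi
          have h1 : wordLen n (y * s i) ≤ invCount (y * s i) := ih _ (by omega)
          obtain ⟨w, hwl, hwp⟩ := exists_reduced_word (y * s i)
          have : ((w ++ [i]).map (adjTransposition n)).prod = y := by
            rw [List.map_append, List.prod_append]
            simp [hwp, mul_assoc, s_mul_self]
          have := wordLen_le this
          simp only [List.length_append, List.length_cons, List.length_nil] at this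
          omega
  · obtain ⟨w, hwl, hwp⟩ := exists_reduced_word x
    have h := invCount_le_length w
    rw [hwp, hwl] at h
    exact h

lemma wordLen_one : wordLen n (1 : Equiv.Perm (Fin (n + 1))) = 0 := by
  rw [wordLen_eq_invCount, invCount_one]

lemma wordLen_mul_s_of_ascent {x : Equiv.Perm (Fin (n + 1))} {i : Fin n}
    (h : x i.castSucc < x i.succ) : wordLen n (x * s i) = wordLen n x + 1 := by
  rw [wordLen_eq_invCount, wordLen_eq_invCount, invCount_mul_s_of_ascent h]

lemma wordLen_mul_s_of_descent {x : Equiv.Perm (Fin (n + 1))} {i : Fin n}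
    (h : x i.succ < x i.castSucc) : wordLen n x = wordLen n (x * s i) + 1 := by
  rw [wordLen_eq_invCount, wordLen_eq_invCount, invCount_mul_s_of_descent h]

lemma ascent_of_wordLen {x : Equiv.Perm (Fin (n + 1))} {i : Fin n}
    (h : wordLen n (x * s i) = wordLen n x + 1) : x i.castSucc < x i.succ := by
  rcases lt_trichotomy (x i.castSucc) (x i.succ) with h' | h' | h'
  · exact h'
  · exact absurd (x.injective h') (Fin.castSucc_lt_succ (i := i)).ne
  · have := wordLen_mul_s_of_descent h'
    omega

lemma wordLen_s (i : Fin n) : wordLen n (s i) = 1 := by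
  have h1 : wordLen n (s i) ≤ 1 := wordLen_le (w := [i]) (by simp)
  have h2 : wordLen n (s i) ≠ 0 := by
    intro h
    obtain ⟨w, hwl, hwp⟩ := exists_reduced_word (s i)
    rw [h, List.length_eq_zero_iff] at hwl
    subst hwl
    simp at hwp
    exact s_ne_one i hwp.symm
  omega

end BraidSec
namespace BraidSec
open Equiv Equiv.Perm Finset
variable {n : ℕ}

abbrev σ (i : Fin n) : BraidGroup n := PresentedGroup.of i

lemma braid_rel_one {r : FreeGroup (Fin n)} (hr : r ∈ braidRels n) :
    PresentedGroup.mk (braidRels n) r = 1 :=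
  (QuotientGroup.eq_one_iff _).mpr (Subgroup.subset_normalClosure hr)

lemma σ_comm {i j : Fin n} (h : (i : ℕ) + 2 ≤ (j : ℕ)) : σ i * σ j = σ j * σ i := by
  have hr : FreeGroup.of i * FreeGroup.of j * (FreeGroup.of i)⁻¹ * (FreeGroup.of j)⁻¹
      ∈ braidRels n := Or.inl ⟨i, j, h, rfl⟩
  have h1 := braid_rel_one hr
  simp only [map_mul, map_inv] at h1
  have h2 : σ i * σ j * (σ i)⁻¹ * (σ j)⁻¹ = 1 := h1
  calc σ i * σ j = (σ i * σ j * (σ i)⁻¹ * (σ j)⁻¹) * (σ j * σ i) := by group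
    _ = σ j * σ i := by rw [h2]; group

lemma σ_braid {i j : Fin n} (h : (j : ℕ) = (i : ℕ) + 1) :
    σ i * σ j * σ i = σ j * σ i * σ j := by
  have hr : FreeGroup.of i * FreeGroup.of j * FreeGroup.of i *
      (FreeGroup.of j * FreeGroup.of i * FreeGroup.of j)⁻¹ ∈ braidRels n :=
    Or.inr ⟨i, j, h, rfl⟩
  have h1 := braid_rel_one hr
  simp only [map_mul, map_inv] at h1
  have h2 : σ i * σ j * σ i * (σ j * σ i * σ j)⁻¹ = 1 := h1
  calc σ i * σ j * σ i = (σ i * σ j * σ i * (σ j * σ i * σ j)⁻¹) * (σ j * σ i * σ j) := by group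
    _ = σ j * σ i * σ j := by rw [h2]; group

def moved (x : Equiv.Perm (Fin (n + 1))) : Finset (Fin (n + 1)) :=
  univ.filter (fun k => x k ≠ k)

lemma moved_nonempty {x : Equiv.Perm (Fin (n + 1))} (hx : x ≠ 1) : (moved x).Nonempty := by
  by_contra h
  simp only [moved] at h
  rw [Finset.not_nonempty_iff_eq_empty, Finset.filter_eq_empty_iff] at h
  exact hx (Equiv.ext fun k => not_ne_iff.mp (h (mem_univ k)))

def topVal (x : Equiv.Perm (Fin (n + 1))) (hx : x ≠ 1) : Fin (n + 1) :=
  (moved x).max' (moved_nonempty hx)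

lemma topVal_moved {x : Equiv.Perm (Fin (n + 1))} (hx : x ≠ 1) :
    x (topVal x hx) ≠ topVal x hx := by
  have := (moved x).max'_mem (moved_nonempty hx)
  simp only [moved, mem_filter] at this
  exact this.2

lemma fixed_of_gt_topVal {x : Equiv.Perm (Fin (n + 1))} (hx : x ≠ 1) {k : Fin (n + 1)}
    (hk : topVal x hx < k) : x k = k := by
  by_contra h
  have : k ∈ moved x := by simp only [moved, mem_filter]; exact ⟨mem_univ k, h⟩
  exact absurd ((moved x).le_max' k this) (not_le.mpr hk)

lemma apply_le_topVal {x : Equiv.Perm (Fin (n + 1))} (hx : x ≠ 1) {k : Fin (n + 1)}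
    (hk : k ≤ topVal x hx) : x k ≤ topVal x hx := by
  by_contra h
  rw [not_le] at h
  have h1 : x (x k) = x k := fixed_of_gt_topVal hx h
  have h2 : x k = k := x.injective h1
  rw [h2] at h
  exact absurd hk (not_le.mpr h)

lemma inv_topVal_ne {x : Equiv.Perm (Fin (n + 1))} (hx : x ≠ 1) :
    x⁻¹ (topVal x hx) ≠ topVal x hx := by
  intro h
  apply topVal_moved hx
  nth_rewrite 1 [← h]
  exact x.apply_symm_apply _

lemma inv_topVal_lt {x : Equiv.Perm (Fin (n + 1))} (hx : x ≠ 1) :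
    x⁻¹ (topVal x hx) < topVal x hx := by
  by_contra h
  rw [not_lt] at h
  have hv : topVal x hx < x⁻¹ (topVal x hx) := lt_of_le_of_ne h (Ne.symm (inv_topVal_ne hx))
  have h2 := fixed_of_gt_topVal hx hv
  rw [Equiv.Perm.coe_inv, Equiv.apply_symm_apply] at h2
  exact inv_topVal_ne hx h2.symm

end BraidSec
namespace BraidSec
open Equiv Equiv.Perm Finset
variable {n : ℕ}

def peel (x : Equiv.Perm (Fin (n + 1))) (hx : x ≠ 1) : Fin n :=
  ⟨(x⁻¹ (topVal x hx) : ℕ), by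
    have h1 := inv_topVal_lt hx
    have h2 : (topVal x hx : ℕ) ≤ n := Fin.is_le _
    rw [Fin.lt_def] at h1
    omega⟩

lemma peel_castSucc {x : Equiv.Perm (Fin (n + 1))} (hx : x ≠ 1) :
    (peel x hx).castSucc = x⁻¹ (topVal x hx) := by
  apply Fin.ext
  rfl

lemma x_peel {x : Equiv.Perm (Fin (n + 1))} (hx : x ≠ 1) :
    x ((peel x hx).castSucc) = topVal x hx := by
  rw [peel_castSucc]
  exact x.apply_symm_apply _

lemma peel_succ_le {x : Equiv.Perm (Fin (n + 1))} (hx : x ≠ 1) :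
    (peel x hx).succ ≤ topVal x hx := by
  have h1 := inv_topVal_lt hx
  rw [← peel_castSucc hx] at h1
  rw [Fin.le_def]
  rw [Fin.lt_def] at h1
  simp only [Fin.val_succ, Fin.coe_castSucc] at *
  omega

lemma peel_descent {x : Equiv.Perm (Fin (n + 1))} (hx : x ≠ 1) :
    x ((peel x hx).succ) < x ((peel x hx).castSucc) := by
  rw [x_peel hx]
  have h1 : x ((peel x hx).succ) ≤ topVal x hx := apply_le_topVal hx (peel_succ_le hx)
  refine lt_of_le_of_ne h1 ?_
  intro h
  rw [← x_peel hx] at h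
  exact absurd (x.injective h) (Fin.castSucc_lt_succ (i := peel x hx)).ne'

noncomputable def rfun : Equiv.Perm (Fin (n + 1)) → BraidGroup n := fun x =>
  if hx : x = 1 then 1
  else rfun (x * s (peel x hx)) * σ (peel x hx)
termination_by x => invCount x
decreasing_by
  have := invCount_mul_s_of_descent (peel_descent hx)
  omega

lemma rfun_one : rfun (1 : Equiv.Perm (Fin (n + 1))) = 1 := by
  rw [rfun]
  simp

lemma rfun_step {x : Equiv.Perm (Fin (n + 1))} {v : Fin (n + 1)} {m : Fin n}
    (h1 : ∀ k, v < k → x k = k) (h2 : x m.castSucc = v) (h3 : m.castSucc ≠ v) :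
    rfun x = rfun (x * s m) * σ m := by
  have hx : x ≠ 1 := by
    intro h
    rw [h] at h2
    exact h3 h2
  have hvmoved : v ∈ moved x := by
    simp only [moved, mem_filter]
    refine ⟨mem_univ v, ?_⟩
    intro h
    exact h3 (x.injective (by rw [h2, h]))
  have htop : topVal x hx = v := by
    apply le_antisymm
    · apply Finset.max'_le
      intro k hk
      simp only [moved, mem_filter] at hk
      by_contra hlt
      rw [not_le] at hlt
      exact hk.2 (h1 k hlt)
    · exact Finset.le_max' _ v hvmoved
  have hpeel : peel x hx = m := by
    apply Fin.ext
    have : x⁻¹ (topVal x hx) = m.castSucc := by rw [htop, ← h2, Equiv.Perm.coe_inv, Equiv.symm_apply_apply]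
    have h4 : ((peel x hx).castSucc : ℕ) = (m.castSucc : ℕ) := by rw [peel_castSucc hx, this]
    simpa using h4
  conv_lhs => rw [rfun]
  rw [dif_neg hx, hpeel]

end BraidSec
namespace BraidSec
open Equiv Equiv.Perm Finset
variable {n : ℕ}

lemma fin_ne_of_val_ne' {a b : Fin (n + 1)} (h : (a : ℕ) ≠ (b : ℕ)) : a ≠ b :=
  fun hc => h (congrArg Fin.val hc)

lemma braid_conj {x : Equiv.Perm (Fin (n + 1))} (i : Fin n) :
    x * s i * x⁻¹ = Equiv.swap (x i.castSucc) (x i.succ) :=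
  (Equiv.swap_apply_apply x i.castSucc i.succ).symm

lemma s_conj (m i : Fin n) :
    s m * s i * s m = Equiv.swap (s m i.castSucc) (s m i.succ) := by
  have h := braid_conj (x := s m) (i := i)
  rwa [show (s m)⁻¹ = s m from Equiv.swap_inv _ _] at h

lemma s_comm_perm {i m : Fin n} (h : (i : ℕ) + 2 ≤ (m : ℕ) ∨ (m : ℕ) + 2 ≤ (i : ℕ)) :
    s i * s m = s m * s i := by
  have h1 : s i * s m * s i = Equiv.swap (s i m.castSucc) (s i m.succ) := s_conj i m
  have h2 : s i m.castSucc = m.castSucc :=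
    s_apply_of_ne (fin_ne_of_val_ne' (by simp only [Fin.val_succ, Fin.coe_castSucc]; omega))
      (fin_ne_of_val_ne' (by simp only [Fin.val_succ, Fin.coe_castSucc]; omega))
  have h3 : s i m.succ = m.succ :=
    s_apply_of_ne (fin_ne_of_val_ne' (by simp only [Fin.val_succ, Fin.coe_castSucc]; omega))
      (fin_ne_of_val_ne' (by simp only [Fin.val_succ, Fin.coe_castSucc]; omega))
  rw [h2, h3] at h1
  calc s i * s m = (s i * s m * s i) * s i := by rw [mul_assoc, s_mul_self, mul_one]
    _ = s m * s i := by rw [h1]; rfl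

lemma s_braid_perm {i m : Fin n} (h : (i : ℕ) = (m : ℕ) + 1) :
    s m * s i * s m = s i * s m * s i := by
  have hic : i.castSucc = m.succ := Fin.ext (by simp [h])
  have h1 : s m * s i * s m = Equiv.swap (s m i.castSucc) (s m i.succ) := s_conj m i
  have h2 : s i * s m * s i = Equiv.swap (s i m.castSucc) (s i m.succ) := s_conj i m
  rw [hic, s_succ] at h1
  have h3 : s m i.succ = i.succ :=
    s_apply_of_ne (fin_ne_of_val_ne' (by simp only [Fin.val_succ, Fin.coe_castSucc]; omega))
      (fin_ne_of_val_ne' (by simp only [Fin.val_succ]; omega))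
  rw [h3] at h1
  have h4 : s i m.castSucc = m.castSucc :=
    s_apply_of_ne (fin_ne_of_val_ne' (by simp only [Fin.coe_castSucc]; omega))
      (fin_ne_of_val_ne' (by simp only [Fin.val_succ, Fin.coe_castSucc]; omega))
  have h5 : s i m.succ = i.succ := by rw [← hic, s_castSucc]
  rw [h4, h5] at h2
  rw [h1, h2]

end BraidSec
namespace BraidSec
open Equiv Equiv.Perm Finset
variable {n : ℕ}

lemma σ_comm' {i m : Fin n} (h : (i : ℕ) + 2 ≤ (m : ℕ) ∨ (m : ℕ) + 2 ≤ (i : ℕ)) :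
    σ i * σ m = σ m * σ i := by
  rcases h with h | h
  · exact σ_comm h
  · exact (σ_comm h).symm

lemma mul_s_apply_ne {x : Equiv.Perm (Fin (n + 1))} {i : Fin n} {k : Fin (n + 1)}
    (h1 : k ≠ i.castSucc) (h2 : k ≠ i.succ) : (x * s i) k = x k := by
  rw [Equiv.Perm.mul_apply, s_apply_of_ne h1 h2]

lemma le_of_fix {x : Equiv.Perm (Fin (n + 1))} {v : Fin (n + 1)}
    (hfix : ∀ k, v < k → x k = k) {k : Fin (n + 1)} (hk : k ≤ v) : x k ≤ v := by
  by_contra hcon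
  rw [not_le] at hcon
  have h1 : x (x k) = x k := hfix _ hcon
  have h2 : x k = k := x.injective h1
  rw [h2] at hcon
  exact absurd hk (not_le.mpr hcon)

lemma exists_top {x : Equiv.Perm (Fin (n + 1))} (hx : x ≠ 1) :
    ∃ (v : Fin (n + 1)) (m : Fin n), (∀ k, v < k → x k = k) ∧ x m.castSucc = v ∧
      m.castSucc < v :=
  ⟨topVal x hx, peel x hx, fun _ hk => fixed_of_gt_topVal hx hk, x_peel hx,
    by rw [peel_castSucc hx]; exact inv_topVal_lt hx⟩

lemma rfun_s (i : Fin n) : rfun (s i) = σ i := by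
  have hstep : rfun (s i) = rfun (s i * s i) * σ i := by
    refine rfun_step (v := i.succ) ?_ ?_ ?_
    · intro k hk
      have hk' : (i : ℕ) + 1 < (k : ℕ) := hk
      refine s_apply_of_ne (fin_ne_of_val_ne' ?_) (fin_ne_of_val_ne' ?_) <;>
        simp only [Fin.coe_castSucc, Fin.val_succ] <;> omega
    · exact s_castSucc i
    · exact (Fin.castSucc_lt_succ (i := i)).ne
  rw [hstep, s_mul_self, rfun_one, one_mul]

lemma rfun_mul_s_aux : ∀ (N : ℕ) (x : Equiv.Perm (Fin (n + 1))) (i : Fin n),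
    invCount x ≤ N → x i.castSucc < x i.succ → rfun (x * s i) = rfun x * σ i := by
  intro N
  induction N with
  | zero =>
      intro x i hN h
      rw [eq_one_of_invCount (Nat.le_zero.mp hN)] at h ⊢
      rw [one_mul, rfun_one, one_mul, rfun_s]
  | succ N ih =>
      intro x i hN h
      rcases eq_or_ne x 1 with rfl | hx1
      · rw [one_mul, rfun_one, one_mul, rfun_s]
      obtain ⟨v, m, hfix, hmv, hlt⟩ := exists_top hx1
      have hMv : (m : ℕ) < (v : ℕ) := hlt
      -- descent of x at m, so invCount decreases
      have hdescm : x m.succ < x m.castSucc := by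
        rw [hmv]
        have hsle : m.succ ≤ v := by
          rw [Fin.le_def]; simp only [Fin.val_succ]; omega
        refine lt_of_le_of_ne (le_of_fix hfix hsle) ?_
        intro hc
        rw [← hmv] at hc
        exact absurd (x.injective hc) (Fin.castSucc_lt_succ (i := m)).ne'
      have hinvm := invCount_mul_s_of_descent hdescm
      by_cases hMI : (m : ℕ) = (i : ℕ) + 1
      · -- Case: m = i + 1.  Then (x * s i) has top value v at position i.succ.
        have hmi : i.succ = m.castSucc :=
          Fin.ext (by simp only [Fin.coe_castSucc, Fin.val_succ]; omega)
        have hstep : rfun (x * s i) = rfun (x * s i * s i) * σ i := by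
          refine rfun_step (v := v) ?_ ?_ ?_
          · intro k hk
            have hk' : (v : ℕ) < (k : ℕ) := hk
            rw [mul_s_apply_ne (fin_ne_of_val_ne' ?_) (fin_ne_of_val_ne' ?_), hfix k hk] <;>
              simp only [Fin.coe_castSucc, Fin.val_succ] <;> omega
          · rw [Equiv.Perm.mul_apply, s_castSucc, hmi, hmv]
          · exact fin_ne_of_val_ne' (by simp only [Fin.coe_castSucc]; omega)
        rw [hstep, mul_assoc, s_mul_self, mul_one]
      by_cases hvI : (v : ℕ) ≤ (i : ℕ)
      · -- Case: i is beyond the support of x.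
        have hstep : rfun (x * s i) = rfun (x * s i * s i) * σ i := by
          refine rfun_step (v := i.succ) ?_ ?_ ?_
          · intro k hk
            have hk' : (i : ℕ) + 1 < (k : ℕ) := hk
            rw [mul_s_apply_ne (fin_ne_of_val_ne' ?_) (fin_ne_of_val_ne' ?_)]
            · exact hfix k (by rw [Fin.lt_def]; omega)
            · simp only [Fin.coe_castSucc]; omega
            · simp only [Fin.val_succ]; omega
          · rw [Equiv.Perm.mul_apply, s_castSucc]
            exact hfix i.succ (by rw [Fin.lt_def]; simp only [Fin.val_succ]; omega)
          · exact (Fin.castSucc_lt_succ (i := i)).ne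
        rw [hstep, mul_assoc, s_mul_self, mul_one]
      rw [not_le] at hvI
      -- Now (i : ℕ) < v.
      have hMneI : (m : ℕ) ≠ (i : ℕ) := by
        intro he
        have hmi : m.castSucc = i.castSucc := Fin.ext (by simpa using he)
        rw [hmi] at hmv
        have hxis : x i.succ ≤ v :=
          le_of_fix hfix (by rw [Fin.le_def]; simp only [Fin.val_succ]; omega)
        rw [hmv] at h
        exact absurd h (not_lt.mpr hxis)
      have ne_mc_ic : m.castSucc ≠ i.castSucc :=
        fin_ne_of_val_ne' (by simp only [Fin.coe_castSucc]; omega)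
      have ne_mc_is : m.castSucc ≠ i.succ :=
        fin_ne_of_val_ne' (by simp only [Fin.coe_castSucc, Fin.val_succ]; omega)
      by_cases hbr : (m : ℕ) + 1 = (i : ℕ)
      · -- braid case
        have hms : m.succ = i.castSucc :=
          Fin.ext (by simp only [Fin.coe_castSucc, Fin.val_succ]; omega)
        have ne_is_mc : i.succ ≠ m.castSucc := ne_mc_is.symm
        have ne_is_ms : i.succ ≠ m.succ :=
          fin_ne_of_val_ne' (by simp only [Fin.val_succ]; omega)
        have ne_ic_v : i.castSucc ≠ v :=
          fin_ne_of_val_ne' (by simp only [Fin.coe_castSucc]; omega)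
        have hxis_lt : x i.succ < v := by
          refine lt_of_le_of_ne
            (le_of_fix hfix (by rw [Fin.le_def]; simp only [Fin.val_succ]; omega)) ?_
          intro hc
          rw [← hmv] at hc
          exact ne_is_mc (x.injective hc)
        have step1 : rfun x = rfun (x * s m) * σ m := rfun_step hfix hmv hlt.ne
        have step2 : rfun (x * s m) = rfun (x * s m * s i) * σ i := by
          refine rfun_step (v := v) ?_ ?_ ?_
          · intro k hk
            have hk' : (v : ℕ) < (k : ℕ) := hk
            rw [mul_s_apply_ne (fin_ne_of_val_ne' ?_) (fin_ne_of_val_ne' ?_), hfix k hk] <;>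
              simp only [Fin.coe_castSucc, Fin.val_succ] <;> omega
          · rw [← hms, Equiv.Perm.mul_apply, s_succ]; exact hmv
          · exact ne_ic_v
        have step3 : rfun (x * s i) = rfun (x * s i * s m) * σ m := by
          refine rfun_step (v := v) ?_ ?_ ?_
          · intro k hk
            have hk' : (v : ℕ) < (k : ℕ) := hk
            rw [mul_s_apply_ne (fin_ne_of_val_ne' ?_) (fin_ne_of_val_ne' ?_), hfix k hk] <;>
              simp only [Fin.coe_castSucc, Fin.val_succ] <;> omega
          · rw [mul_s_apply_ne ne_mc_ic ne_mc_is]; exact hmv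
          · exact hlt.ne
        have step4 : rfun (x * s i * s m) = rfun (x * s i * s m * s i) * σ i := by
          refine rfun_step (v := v) ?_ ?_ ?_
          · intro k hk
            have hk' : (v : ℕ) < (k : ℕ) := hk
            rw [mul_s_apply_ne (fin_ne_of_val_ne' ?_) (fin_ne_of_val_ne' ?_),
              mul_s_apply_ne (fin_ne_of_val_ne' ?_) (fin_ne_of_val_ne' ?_), hfix k hk] <;>
              simp only [Fin.coe_castSucc, Fin.val_succ] <;> omega
          · rw [← hms, Equiv.Perm.mul_apply, s_succ, mul_s_apply_ne ne_mc_ic ne_mc_is]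
            exact hmv
          · exact ne_ic_v
        have hperm : x * s i * s m * s i = x * s m * s i * s m := by
          have hb := s_braid_perm (i := i) (m := m) hbr.symm
          have hb' : s i * (s m * s i) = s m * (s i * s m) := by
            rw [← mul_assoc, ← mul_assoc, hb]
          simp only [mul_assoc]
          rw [hb']
        have hdesc2 : (x * s m) i.succ < (x * s m) i.castSucc := by
          rw [mul_s_apply_ne ne_is_mc ne_is_ms, ← hms, Equiv.Perm.mul_apply, s_succ, hmv]
          exact hxis_lt
        have hinv2 := invCount_mul_s_of_descent hdesc2
        have e1 : (x * s m * s i) m.castSucc = x i.castSucc := by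
          rw [mul_s_apply_ne ne_mc_ic ne_mc_is, Equiv.Perm.mul_apply, s_castSucc, hms]
        have e2 : (x * s m * s i) m.succ = x i.succ := by
          rw [hms, Equiv.Perm.mul_apply, s_castSucc, mul_s_apply_ne ne_is_mc ne_is_ms]
        have ascent2 : (x * s m * s i) m.castSucc < (x * s m * s i) m.succ := by
          rw [e1, e2]; exact h
        have ih2 := ih (x * s m * s i) m (by omega) ascent2
        have hbraidσ : σ m * σ i * σ m = σ i * σ m * σ i := σ_braid hbr.symm
        calc rfun (x * s i) = rfun (x * s i * s m) * σ m := step3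
          _ = rfun (x * s i * s m * s i) * σ i * σ m := by rw [step4]
          _ = rfun (x * s m * s i * s m) * σ i * σ m := by rw [hperm]
          _ = rfun (x * s m * s i) * σ m * σ i * σ m := by rw [ih2]
          _ = rfun (x * s m * s i) * (σ m * σ i * σ m) := by group
          _ = rfun (x * s m * s i) * (σ i * σ m * σ i) := by rw [hbraidσ]
          _ = rfun (x * s m * s i) * σ i * (σ m * σ i) := by group
          _ = rfun (x * s m) * (σ m * σ i) := by rw [← step2]
          _ = rfun (x * s m) * σ m * σ i := by group
          _ = rfun x * σ i := by rw [← step1]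
      · -- commuting case
        have hfar : (i : ℕ) + 2 ≤ (m : ℕ) ∨ (m : ℕ) + 2 ≤ (i : ℕ) := by omega
        have ne_ic_mc : i.castSucc ≠ m.castSucc := ne_mc_ic.symm
        have ne_ic_ms : i.castSucc ≠ m.succ :=
          fin_ne_of_val_ne' (by simp only [Fin.coe_castSucc, Fin.val_succ]; omega)
        have ne_is_mc : i.succ ≠ m.castSucc := ne_mc_is.symm
        have ne_is_ms : i.succ ≠ m.succ :=
          fin_ne_of_val_ne' (by simp only [Fin.val_succ]; omega)
        have step_x : rfun x = rfun (x * s m) * σ m := rfun_step hfix hmv hlt.ne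
        have step_y : rfun (x * s i) = rfun (x * s i * s m) * σ m := by
          refine rfun_step (v := v) ?_ ?_ ?_
          · intro k hk
            have hk' : (v : ℕ) < (k : ℕ) := hk
            rw [mul_s_apply_ne (fin_ne_of_val_ne' ?_) (fin_ne_of_val_ne' ?_), hfix k hk] <;>
              simp only [Fin.coe_castSucc, Fin.val_succ] <;> omega
          · rw [mul_s_apply_ne ne_mc_ic ne_mc_is]; exact hmv
          · exact hlt.ne
        have hcomm : x * s i * s m = x * s m * s i := by
          rw [mul_assoc, mul_assoc, s_comm_perm hfar]
        have ascent' : (x * s m) i.castSucc < (x * s m) i.succ := by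
          rw [mul_s_apply_ne ne_ic_mc ne_ic_ms, mul_s_apply_ne ne_is_mc ne_is_ms]
          exact h
        have ihstep := ih (x * s m) i (by omega) ascent'
        calc rfun (x * s i) = rfun (x * s i * s m) * σ m := step_y
          _ = rfun (x * s m * s i) * σ m := by rw [hcomm]
          _ = rfun (x * s m) * σ i * σ m := by rw [ihstep]
          _ = rfun (x * s m) * (σ i * σ m) := by group
          _ = rfun (x * s m) * (σ m * σ i) := by rw [σ_comm' hfar]
          _ = rfun (x * s m) * σ m * σ i := by group
          _ = rfun x * σ i := by rw [← step_x]

end BraidSec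
namespace BraidSec
open Equiv Equiv.Perm Finset
variable {n : ℕ}

lemma rfun_mul_s {x : Equiv.Perm (Fin (n + 1))} {i : Fin n}
    (h : x i.castSucc < x i.succ) : rfun (x * s i) = rfun x * σ i :=
  rfun_mul_s_aux (invCount x) x i le_rfl h

lemma rfun_word : ∀ (w : List (Fin n)) (x : Equiv.Perm (Fin (n + 1))),
    wordLen n (x * (w.map (adjTransposition n)).prod) = wordLen n x + w.length →
    rfun (x * (w.map (adjTransposition n)).prod) = rfun x * (w.map σ).prod := by
  intro w
  induction w using List.reverseRecOn with
  | nil => intro x _; simp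
  | append_singleton w i ihw =>
      intro x hlen
      rw [List.map_append, List.prod_append] at hlen
      rw [List.map_append, List.prod_append, List.map_append, List.prod_append]
      simp only [List.map_cons, List.map_nil, List.prod_cons, List.prod_nil, mul_one,
        List.length_append, List.length_cons, List.length_nil] at hlen ⊢
      rw [show adjTransposition n i = s i from rfl] at hlen ⊢
      rw [← mul_assoc] at hlen ⊢
      set z := x * (w.map (adjTransposition n)).prod with hz
      have hle1 : wordLen n z ≤ wordLen n x + w.length := by
        obtain ⟨u, hu1, hu2⟩ := exists_reduced_word x
        have : (((u ++ w).map (adjTransposition n)).prod) = z := by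
          rw [List.map_append, List.prod_append, hu2]
        have h3 := wordLen_le this
        simp only [List.length_append] at h3
        omega
      have hle2 : wordLen n (z * s i) ≤ wordLen n z + 1 := by
        obtain ⟨u, hu1, hu2⟩ := exists_reduced_word z
        have : (((u ++ [i]).map (adjTransposition n)).prod) = z * s i := by
          rw [List.map_append, List.prod_append, hu2]
          simp
        have h3 := wordLen_le this
        simp only [List.length_append, List.length_cons, List.length_nil] at h3
        omega
      have heq1 : wordLen n z = wordLen n x + w.length := by omega
      have heq2 : wordLen n (z * s i) = wordLen n z + 1 := by omega
      have hasc := ascent_of_wordLen heq2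
      rw [rfun_mul_s hasc, ihw x heq1, mul_assoc]

lemma rfun_mul {x y : Equiv.Perm (Fin (n + 1))}
    (hxy : wordLen n (x * y) = wordLen n x + wordLen n y) :
    rfun (x * y) = rfun x * rfun y := by
  obtain ⟨w, hwl, hwp⟩ := exists_reduced_word y
  have h1 : rfun (x * (w.map (adjTransposition n)).prod) = rfun x * (w.map σ).prod :=
    rfun_word w x (by rw [hwp, hxy, hwl])
  have h2 : rfun y = (w.map σ).prod := by
    have h3 : wordLen n ((1 : Equiv.Perm (Fin (n + 1))) * (w.map (adjTransposition n)).prod)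
        = wordLen n (1 : Equiv.Perm (Fin (n + 1))) + w.length := by
      rw [one_mul, hwp, wordLen_one, hwl]
      omega
    have h4 := rfun_word w 1 h3
    rw [one_mul, hwp, rfun_one, one_mul] at h4
    exact h4
  rw [hwp] at h1
  rw [h1, h2]

lemma rfun_unique (r' : Equiv.Perm (Fin (n + 1)) → BraidGroup n)
    (hr1 : ∀ i : Fin n, r' (adjTransposition n i) = PresentedGroup.of i)
    (hr2 : ∀ x y : Equiv.Perm (Fin (n + 1)),
      wordLen n (x * y) = wordLen n x + wordLen n y → r' (x * y) = r' x * r' y) :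
    r' = rfun := by
  have hone : r' 1 = 1 := by
    have h := hr2 1 1 (by rw [mul_one, wordLen_one])
    rw [mul_one] at h
    exact left_eq_mul.mp h
  funext x
  suffices H : ∀ (N : ℕ) (x : Equiv.Perm (Fin (n + 1))), wordLen n x ≤ N → r' x = rfun x from
    H _ x le_rfl
  intro N
  induction N with
  | zero =>
      intro x hN
      have hx : x = 1 := by
        apply eq_one_of_invCount
        rw [← wordLen_eq_invCount]
        omega
      rw [hx, hone, rfun_one]
  | succ N ih =>
      intro x hN
      rcases eq_or_ne x 1 with rfl | hx1
      · rw [hone, rfun_one]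
      obtain ⟨i, hi⟩ := exists_descent hx1
      have hlen := wordLen_mul_s_of_descent hi
      have hx : x = (x * s i) * s i := by rw [mul_assoc, s_mul_self, mul_one]
      have h2 : wordLen n ((x * s i) * s i) = wordLen n (x * s i) + wordLen n (s i) := by
        rw [← hx, wordLen_s]
        omega
      have hasc : (x * s i) i.castSucc < (x * s i) i.succ := by
        simpa only [Equiv.Perm.mul_apply, s_castSucc, s_succ] using hi
      calc r' x = r' ((x * s i) * s i) := by rw [← hx]
        _ = r' (x * s i) * r' (s i) := hr2 _ _ h2
        _ = rfun (x * s i) * σ i := by rw [ih (x * s i) (by omega), hr1 i]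
        _ = rfun ((x * s i) * s i) := (rfun_mul_s hasc).symm
        _ = rfun x := by rw [← hx]

end BraidSec


/-- There is a unique set-theoretic section `r : S_{n+1} → B_{n+1}` of the canonical
projection such that `r(s_i) = σ_i` for all `i` and `r(xy) = r(x) r(y)` whenever
`|xy| = |x| + |y|` for the word length `|·|` in the adjacent transpositions. -/
theorem canonical_section_exists_unique (n : ℕ) :
    ∃! r : Equiv.Perm (Fin (n + 1)) → BraidGroup n,
      (∀ i : Fin n, r (adjTransposition n i) = PresentedGroup.of i) ∧
      (∀ x y : Equiv.Perm (Fin (n + 1)),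
        wordLen n (x * y) = wordLen n x + wordLen n y → r (x * y) = r x * r y) := by
  refine ⟨BraidSec.rfun, ⟨fun i => BraidSec.rfun_s i, fun x y h => BraidSec.rfun_mul h⟩, ?_⟩
  rintro r' ⟨hr1, hr2⟩
  exact BraidSec.rfun_unique r' hr1 hr2
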